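/- (Multiplier estimate in Wiener norm) Let θ₀ ≥ 0, θ_∞ ∈ ℝ, and g: ℝ → ℂ with |g(k)| ≤ C·min(|k|^{θ₀}, (1+|k|)^{θ_∞}), and let g_op = 𝓕^{-1} g 𝓕. If μ₁ = μ₂ ≥ 0 and m₂ − m₁ ≥ max(θ₀, θ_∞), then there is C' > 0 such that for all ε ∈ (0,1), ‖g_op(A(ε·))‖_{W_{μ₁/ε, m₁}} ≤ C' ε^{θ₀} ‖A‖_{W_{μ₂, m₂}}, for all A ∈ W_{μ₂,m₂}. -/

import Mathlib

open MeasureTheory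

/-- Fourier transform of a complex-valued function on `ℝ`. -/
noncomputable def FT (u : ℝ → ℂ) : ℝ → ℂ := FourierTransform.fourier u

/-- Membership in the weighted space `H^∞_{μ,s}`. -/
def memH (μ s : ℝ) (u : ℝ → ℂ) : Prop :=
  MemLp u 2 volume ∧
  MemLp (fun k : ℝ => ((Real.exp (μ * |k|) * (1 + k ^ 2) ^ (s / 2) : ℝ) : ℂ) * FT u k) 2 volume

/-- The norm of the weighted space `H^∞_{μ,s}`. -/
noncomputable def Hnorm (μ s : ℝ) (u : ℝ → ℂ) : ℝ :=
  (∫ k : ℝ, ‖FT u k‖ ^ 2 * Real.exp (2 * μ * |k|) * (1 + k ^ 2) ^ s) ^ ((1 : ℝ) / 2)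

/-- Membership in the weighted Wiener-type space `W_{μ,m}`. -/
def memW (μ m : ℝ) (u : ℝ → ℂ) : Prop :=
  Integrable (fun k : ℝ => (1 + |k| ^ m) * Real.exp (μ * |k|) * ‖FT u k‖) volume

/-- The norm of the weighted Wiener-type space `W_{μ,m}`. -/
noncomputable def Wnorm (μ m : ℝ) (u : ℝ → ℂ) : ℝ :=
  ∫ k : ℝ, (1 + |k| ^ m) * Real.exp (μ * |k|) * ‖FT u k‖

/-- The Fourier multiplier operator with symbol `g`. -/
noncomputable def multOp (g : ℝ → ℂ) (u : ℝ → ℂ) : ℝ → ℂ :=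
  FourierTransformInv.fourierInv (fun k => g k * FT u k)

namespace Stmt15Aux

open FourierTransform Real Complex
open scoped ContDiff

lemma ft_zero_of_not_integrable {f : ℝ → ℂ} (hf : ¬ Integrable f volume) :
    FourierTransform.fourier f = 0 := by
  funext w
  rw [Real.fourier_eq]
  apply integral_undef
  intro hc
  exact hf ((Real.fourierIntegral_convergent_iff w).mp hc)

lemma ftInv_zero_of_not_integrable {f : ℝ → ℂ} (hf : ¬ Integrable f volume) :
    FourierTransformInv.fourierInv f = 0 := by
  rw [Real.fourierInv_eq_fourier_comp_neg]
  apply ft_zero_of_not_integrable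
  intro hc
  exact hf (by simpa using hc.comp_neg)

lemma ft_continuous {f : ℝ → ℂ} (hf : Integrable f volume) :
    Continuous (FourierTransform.fourier f) :=
  VectorFourier.fourierIntegral_continuous (L := innerₗ ℝ) Real.continuous_fourierChar continuous_inner hf

lemma ftInv_continuous {f : ℝ → ℂ} (hf : Integrable f volume) :
    Continuous (FourierTransformInv.fourierInv f) := by
  rw [Real.fourierInv_eq_fourier_comp_neg]
  exact ft_continuous (by simpa using hf.comp_neg)

lemma mult_formula {f g : ℝ → ℂ} (hf : Integrable f volume) (hg : Integrable g volume) :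
    ∫ ξ : ℝ, FourierTransform.fourier f ξ * g ξ = ∫ x : ℝ, f x * FourierTransform.fourier g x := by
  have := VectorFourier.integral_fourierIntegral_smul_eq_flip (L := innerₗ ℝ)
    Real.continuous_fourierChar continuous_inner hf hg
  rw [flip_innerₗ] at this
  simp only [smul_eq_mul] at this
  exact this

lemma integral_comp_neg' (f : ℝ → ℂ) : ∫ x : ℝ, f (-x) = ∫ x : ℝ, f x := by
  have := MeasureTheory.Measure.integral_comp_mul_left f (-1)
  simp only [neg_one_mul] at this
  rw [this]
  norm_num

lemma multInv_formula {f g : ℝ → ℂ} (hf : Integrable f volume) (hg : Integrable g volume) :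
    ∫ ξ : ℝ, FourierTransformInv.fourierInv f ξ * g ξ
      = ∫ x : ℝ, f x * FourierTransformInv.fourierInv g x := by
  calc ∫ ξ : ℝ, FourierTransformInv.fourierInv f ξ * g ξ
      = ∫ ξ : ℝ, FourierTransform.fourier f (-ξ) * g ξ := by
        simp_rw [Real.fourierInv_eq_fourier_neg]
    _ = ∫ ξ : ℝ, FourierTransform.fourier f (-(-ξ)) * g (-ξ) := by
        rw [integral_comp_neg' (fun ξ => FourierTransform.fourier f (-ξ) * g ξ)]
    _ = ∫ ξ : ℝ, FourierTransform.fourier f ξ * (fun y => g (-y)) ξ := by simp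
    _ = ∫ x : ℝ, f x * FourierTransform.fourier (fun y => g (-y)) x := by
        exact mult_formula hf (by simpa using hg.comp_neg)
    _ = ∫ x : ℝ, f x * FourierTransformInv.fourierInv g x := by
        simp_rw [← Real.fourierInv_eq_fourier_comp_neg]

lemma iteratedDeriv_hasCompactSupport {φ : ℝ → ℂ} (hs : HasCompactSupport φ) (n : ℕ) :
    HasCompactSupport (iteratedDeriv n φ) := by
  have h1 : HasCompactSupport (iteratedFDeriv ℝ n φ) := hs.iteratedFDeriv n
  have := h1.comp_left (g := fun L : (ContinuousMultilinearMap ℝ (fun _ : Fin n => ℝ) ℂ)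
      => L (fun _ => 1)) (by simp)
  have heq : (fun x => iteratedFDeriv ℝ n φ x (fun _ => 1)) = iteratedDeriv n φ := by
    funext x; rw [iteratedDeriv_eq_iteratedFDeriv]
  rwa [Function.comp_def, heq] at this

lemma integrable_ft_of_smooth_compsupp {φ : ℝ → ℂ} (hφ : ContDiff ℝ ∞ φ)
    (hs : HasCompactSupport φ) : Integrable (FourierTransform.fourier φ) volume := by
  have hint : ∀ n : ℕ, Integrable (iteratedDeriv n φ) volume := fun n =>
    ((hφ.continuous_iteratedDeriv n (by exact_mod_cast le_top)).integrable_of_hasCompactSupport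
      (iteratedDeriv_hasCompactSupport hs n))
  have hder := Real.fourier_iteratedDeriv (N := (⊤ : ℕ∞)) (n := 2) hφ
    (fun n _ => hint n) le_top
  have hφi : Integrable φ volume := hφ.continuous.integrable_of_hasCompactSupport hs
  set M₀ : ℝ := ∫ x : ℝ, ‖φ x‖ with hM₀
  set M₂ : ℝ := ∫ x : ℝ, ‖iteratedDeriv 2 φ x‖ with hM₂
  have key : ∀ ξ : ℝ, ‖FourierTransform.fourier φ ξ‖ ≤ (M₀ + M₂) / (1 + ξ ^ 2) := by
    intro ξ
    have h0 : ‖FourierTransform.fourier φ ξ‖ ≤ M₀ :=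
      VectorFourier.norm_fourierIntegral_le_integral_norm _ _ _ _ _
    have heq : ‖FourierTransform.fourier (iteratedDeriv 2 φ) ξ‖
        = (2 * π * ξ) ^ 2 * ‖FourierTransform.fourier φ ξ‖ := by
      rw [hder]
      simp only [smul_eq_mul, norm_mul]
      congr 1
      rw [norm_pow]
      have hn : ‖(2 * ↑π * I * (ξ:ℂ) : ℂ)‖ = 2 * π * |ξ| := by
        simp [norm_mul, Complex.norm_I, Complex.norm_real,
          _root_.abs_of_nonneg Real.pi_pos.le]
      rw [hn, mul_pow, mul_pow, _root_.sq_abs]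
      ring
    have h2 : (2 * π * ξ) ^ 2 * ‖FourierTransform.fourier φ ξ‖ ≤ M₂ := by
      rw [← heq]
      exact VectorFourier.norm_fourierIntegral_le_integral_norm _ _ _ _ _
    have h4 : ξ ^ 2 * ‖FourierTransform.fourier φ ξ‖ ≤ M₂ := by
      have hπ2 : (9:ℝ) ≤ π ^ 2 := by nlinarith [Real.pi_gt_three]
      have hnn : 0 ≤ ξ ^ 2 * ‖FourierTransform.fourier φ ξ‖ :=
        mul_nonneg (sq_nonneg ξ) (norm_nonneg _)
      nlinarith [h2, hnn]
    have hpos : (0:ℝ) < 1 + ξ ^ 2 := by positivity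
    rw [le_div_iff₀ hpos]
    nlinarith [norm_nonneg (FourierTransform.fourier φ ξ)]
  apply Integrable.mono' (g := fun ξ : ℝ => (M₀ + M₂) / (1 + ξ ^ 2))
  · have : Integrable (fun ξ : ℝ => (1 + ξ ^ 2)⁻¹) volume := integrable_inv_one_add_sq
    simpa [div_eq_mul_inv] using this.const_mul (M₀ + M₂)
  · exact (ft_continuous hφi).aestronglyMeasurable
  · exact Filter.Eventually.of_forall key

lemma ae_inversion {h : ℝ → ℂ} (hh : Integrable h volume)
    (hFh : Integrable (FourierTransform.fourier h) volume) :
    ∀ᵐ k : ℝ, FourierTransformInv.fourierInv (FourierTransform.fourier h) k = h k := by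
  apply ae_eq_of_integral_contDiff_smul_eq
  · exact (ftInv_continuous hFh).locallyIntegrable
  · exact hh.locallyIntegrable
  · intro w hw hws
    set φ : ℝ → ℂ := fun x => (w x : ℂ) with hφdef
    have hφc : ContDiff ℝ ∞ φ := Complex.ofRealCLM.contDiff.comp hw
    have hφs : HasCompactSupport φ := hws.comp_left (g := fun r : ℝ => (r : ℂ)) (by simp)
    have hφi : Integrable φ volume := hφc.continuous.integrable_of_hasCompactSupport hφs
    have hFφi : Integrable (FourierTransform.fourier φ) volume :=
      integrable_ft_of_smooth_compsupp hφc hφs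
    have hFIφi : Integrable (FourierTransformInv.fourierInv φ) volume := by
      rw [Real.fourierInv_eq_fourier_comp_neg]
      apply integrable_ft_of_smooth_compsupp
      · exact hφc.comp contDiff_neg
      · exact hφs.comp_homeomorph (Homeomorph.neg ℝ)
    have hinv : FourierTransform.fourier (FourierTransformInv.fourierInv φ) = φ :=
      hφc.continuous.fourier_fourierInv_eq hφi hFφi
    have hsmul : ∀ z : ℂ, ∀ x : ℝ, w x • z = φ x * z := by
      intro z x; simp [hφdef, Complex.real_smul]
    simp only [hsmul]
    calc ∫ x : ℝ, φ x * FourierTransformInv.fourierInv (FourierTransform.fourier h) x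
        = ∫ x : ℝ, FourierTransformInv.fourierInv (FourierTransform.fourier h) x * φ x := by
          simp_rw [mul_comm]
      _ = ∫ x : ℝ, FourierTransform.fourier h x * FourierTransformInv.fourierInv φ x :=
          multInv_formula hFh hφi
      _ = ∫ x : ℝ, h x * FourierTransform.fourier (FourierTransformInv.fourierInv φ) x :=
          mult_formula hh hFIφi
      _ = ∫ x : ℝ, φ x * h x := by rw [hinv]; simp_rw [mul_comm]

lemma ft_scale {A : ℝ → ℂ} {ε : ℝ} (hε : 0 < ε) (κ : ℝ) :
    FourierTransform.fourier (fun x => A (ε * x)) (ε * κ)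
      = (ε⁻¹ : ℝ) • FourierTransform.fourier A κ := by
  rw [Real.fourier_real_eq, Real.fourier_real_eq]
  have h1 : (fun v : ℝ => 𝐞 (-(v * (ε * κ))) • A (ε * v))
      = fun v : ℝ => (fun y : ℝ => 𝐞 (-(y * κ)) • A y) (ε * v) := by
    funext v
    simp only []
    congr 2
    ring
  rw [h1, MeasureTheory.Measure.integral_comp_mul_left (fun y : ℝ => 𝐞 (-(y * κ)) • A y) ε,
    abs_of_pos (inv_pos.mpr hε)]

lemma key_bound {θ₀ m₁ m₂ ε x : ℝ} (hθ₀ : 0 ≤ θ₀) (hm₁ : 0 ≤ m₁)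
    (hmm : m₁ + θ₀ ≤ m₂) (hε : 0 < ε) (hε1 : ε < 1) :
    (1 + |ε * x| ^ m₁) * |ε * x| ^ θ₀ ≤ 2 * ε ^ θ₀ * (1 + |x| ^ m₂) := by
  have habs : |ε * x| = ε * |x| := by rw [abs_mul, abs_of_pos hε]
  have hmul : |ε * x| ^ θ₀ = ε ^ θ₀ * |x| ^ θ₀ := by
    rw [habs, Real.mul_rpow hε.le (abs_nonneg x)]
  have he : (0:ℝ) ≤ ε ^ θ₀ := Real.rpow_nonneg hε.le _
  have ht : (0:ℝ) ≤ |x| ^ θ₀ := Real.rpow_nonneg (abs_nonneg _) _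
  have hb : (0:ℝ) ≤ |x| ^ m₂ := Real.rpow_nonneg (abs_nonneg _) _
  rcases le_or_gt (|x|) 1 with hx | hx
  · have h1 : |ε * x| ^ m₁ ≤ 1 := Real.rpow_le_one (abs_nonneg _)
      (by rw [habs]; nlinarith [abs_nonneg x]) hm₁
    have h2 : |x| ^ θ₀ ≤ 1 := Real.rpow_le_one (abs_nonneg _) hx hθ₀
    have h0 : (0:ℝ) ≤ |ε * x| ^ m₁ := Real.rpow_nonneg (abs_nonneg _) _
    rw [hmul]
    calc (1 + |ε * x| ^ m₁) * (ε ^ θ₀ * |x| ^ θ₀)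
        ≤ 2 * (ε ^ θ₀ * |x| ^ θ₀) :=
          mul_le_mul_of_nonneg_right (by linarith) (mul_nonneg he ht)
      _ ≤ 2 * (ε ^ θ₀ * 1) := by nlinarith
      _ ≤ 2 * ε ^ θ₀ * (1 + |x| ^ m₂) := by nlinarith
  · have hx0 : (0:ℝ) < |x| := lt_trans one_pos hx
    have h1 : |ε * x| ^ m₁ ≤ |x| ^ m₁ := Real.rpow_le_rpow (abs_nonneg _)
      (by rw [habs]; nlinarith) hm₁
    have h2 : (1:ℝ) ≤ |x| ^ m₁ := by
      calc (1:ℝ) = |x| ^ (0:ℝ) := (Real.rpow_zero _).symm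
        _ ≤ |x| ^ m₁ := Real.rpow_le_rpow_of_exponent_le hx.le hm₁
    have h3 : |x| ^ m₁ * |x| ^ θ₀ = |x| ^ (m₁ + θ₀) := (Real.rpow_add hx0 _ _).symm
    have h4 : |x| ^ (m₁ + θ₀) ≤ |x| ^ m₂ := Real.rpow_le_rpow_of_exponent_le hx.le hmm
    have h5 : |x| ^ m₁ * |x| ^ θ₀ ≤ |x| ^ m₂ := by rw [h3]; exact h4
    have h0 : (0:ℝ) ≤ |ε * x| ^ m₁ := Real.rpow_nonneg (abs_nonneg _) _
    rw [hmul]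
    have hA : 1 + |ε * x| ^ m₁ ≤ 2 * |x| ^ m₁ := by linarith
    calc (1 + |ε * x| ^ m₁) * (ε ^ θ₀ * |x| ^ θ₀)
        ≤ (2 * |x| ^ m₁) * (ε ^ θ₀ * |x| ^ θ₀) :=
          mul_le_mul_of_nonneg_right hA (mul_nonneg he ht)
      _ = 2 * ε ^ θ₀ * (|x| ^ m₁ * |x| ^ θ₀) := by ring
      _ ≤ 2 * ε ^ θ₀ * (|x| ^ m₂) := by
          have h6 := mul_le_mul_of_nonneg_left h5 (by linarith : (0:ℝ) ≤ 2 * ε ^ θ₀)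
          linarith
      _ ≤ 2 * ε ^ θ₀ * (1 + |x| ^ m₂) := by nlinarith

end Stmt15Aux

namespace Stmt15Aux

lemma wnorm_nonneg (μ m : ℝ) (u : ℝ → ℂ) : 0 ≤ Wnorm μ m u := by
  apply integral_nonneg
  intro k
  have h1 : (0:ℝ) ≤ |k| ^ m := Real.rpow_nonneg (abs_nonneg _) _
  positivity

lemma wnorm_of_ft_zero (μ m : ℝ) (u : ℝ → ℂ) (h : FourierTransform.fourier u = 0) :
    Wnorm μ m u = 0 := by
  unfold Wnorm FT
  rw [h]
  simp

end Stmt15Aux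

theorem stmt_15 (θ₀ θinf C : ℝ) (hθ₀ : 0 ≤ θ₀) (hC : 0 < C)
    (g : ℝ → ℂ)
    (hg : ∀ k : ℝ, ‖g k‖ ≤ C * min (|k| ^ θ₀) ((1 + |k|) ^ θinf))
    (μ₁ μ₂ m₁ m₂ : ℝ) (hμ : μ₁ = μ₂) (hμ₂ : 0 ≤ μ₂) (hm₁ : 0 ≤ m₁) (hm₂ : 0 ≤ m₂)
    (hm : m₂ - m₁ ≥ max θ₀ θinf) :
    ∃ C' > 0, ∀ ε : ℝ, 0 < ε → ε < 1 → ∀ A : ℝ → ℂ, memW μ₂ m₂ A →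
      Wnorm (μ₁ / ε) m₁ (multOp g (fun x => A (ε * x))) ≤
        C' * ε ^ θ₀ * Wnorm μ₂ m₂ A := by
  have hmm : m₁ + θ₀ ≤ m₂ := by
    have := le_max_left θ₀ θinf
    linarith [le_trans this hm]
  refine ⟨2 * C, by linarith, ?_⟩
  intro ε hε hε1 A hA
  set u : ℝ → ℂ := fun x => A (ε * x) with hu_def
  set h : ℝ → ℂ := fun k => g k * FT u k with hh_def
  have hεθ : (0:ℝ) < ε ^ θ₀ := Real.rpow_pos_of_pos hε _
  have hWnn : 0 ≤ Wnorm μ₂ m₂ A := Stmt15Aux.wnorm_nonneg _ _ _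
  have hRHSnn : 0 ≤ 2 * C * ε ^ θ₀ * Wnorm μ₂ m₂ A := by positivity
  have hmo : multOp g u = FourierTransformInv.fourierInv h := rfl
  by_cases hhint : Integrable h volume
  · by_cases hFhint : Integrable (FourierTransform.fourier h) volume
    · -- main case
      have hae : ∀ᵐ k : ℝ, FourierTransform.fourier (multOp g u) k = h k := by
        have h1 : FourierTransform.fourier (multOp g u)
            = FourierTransformInv.fourierInv (FourierTransform.fourier h) := by
          rw [hmo]
          exact Real.fourierInv_comm h
        rw [h1]
        exact Stmt15Aux.ae_inversion hhint hFhint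
      have hLHS : Wnorm (μ₁ / ε) m₁ (multOp g u)
          = ∫ k : ℝ, (1 + |k| ^ m₁) * Real.exp ((μ₁ / ε) * |k|) * ‖h k‖ := by
        unfold Wnorm FT
        apply integral_congr_ae
        filter_upwards [hae] with k hk
        rw [show FourierTransform.fourier (multOp g u) k = h k from hk]
      set Φ : ℝ → ℝ := fun k => (1 + |k| ^ m₁) * Real.exp ((μ₁ / ε) * |k|) * ‖h k‖ with hΦ
      have hchg : ∫ k : ℝ, Φ k = ∫ x : ℝ, ε * Φ (ε * x) := by
        rw [MeasureTheory.integral_const_mul]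
        rw [MeasureTheory.Measure.integral_comp_mul_left Φ ε,
          abs_of_pos (inv_pos.mpr hε), smul_eq_mul, ← mul_assoc,
          mul_inv_cancel₀ hε.ne', one_mul]
      have hpt : ∀ x : ℝ, ε * Φ (ε * x)
          ≤ (2 * C * ε ^ θ₀) * ((1 + |x| ^ m₂) * Real.exp (μ₂ * |x|) * ‖FT A x‖) := by
        intro x
        have hscale : ‖FT u (ε * x)‖ = ε⁻¹ * ‖FT A x‖ := by
          show ‖FourierTransform.fourier (fun y => A (ε * y)) (ε * x)‖ = _
          rw [Stmt15Aux.ft_scale hε x, norm_smul]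
          rw [Real.norm_eq_abs, abs_of_pos (inv_pos.mpr hε)]
          rfl
        have hnorm : ‖h (ε * x)‖ = ‖g (ε * x)‖ * (ε⁻¹ * ‖FT A x‖) := by
          rw [hh_def]
          simp only [norm_mul]
          rw [hscale]
        have hexp : (μ₁ / ε) * |ε * x| = μ₂ * |x| := by
          rw [abs_mul, abs_of_pos hε, hμ]
          field_simp
        have hgb : ‖g (ε * x)‖ ≤ C * |ε * x| ^ θ₀ :=
          le_trans (hg (ε * x)) (mul_le_mul_of_nonneg_left (min_le_left _ _) hC.le)
        have hgnn : 0 ≤ ‖g (ε * x)‖ := norm_nonneg _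
        have hkb : (1 + |ε * x| ^ m₁) * ‖g (ε * x)‖
            ≤ 2 * C * ε ^ θ₀ * (1 + |x| ^ m₂) := by
          have h1 : (1 + |ε * x| ^ m₁) * ‖g (ε * x)‖
              ≤ (1 + |ε * x| ^ m₁) * (C * |ε * x| ^ θ₀) := by
            apply mul_le_mul_of_nonneg_left hgb
            have : (0:ℝ) ≤ |ε * x| ^ m₁ := Real.rpow_nonneg (abs_nonneg _) _
            linarith
          have h2 : (1 + |ε * x| ^ m₁) * (C * |ε * x| ^ θ₀)
              = C * ((1 + |ε * x| ^ m₁) * |ε * x| ^ θ₀) := by ring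
          have h3 := Stmt15Aux.key_bound hθ₀ hm₁ hmm hε hε1 (x := x)
          have h4 := mul_le_mul_of_nonneg_left h3 hC.le
          calc (1 + |ε * x| ^ m₁) * ‖g (ε * x)‖
              ≤ C * ((1 + |ε * x| ^ m₁) * |ε * x| ^ θ₀) := by rw [← h2]; exact h1
            _ ≤ C * (2 * ε ^ θ₀ * (1 + |x| ^ m₂)) := h4
            _ = 2 * C * ε ^ θ₀ * (1 + |x| ^ m₂) := by ring
        have hΦval : ε * Φ (ε * x)
            = (1 + |ε * x| ^ m₁) * ‖g (ε * x)‖ * (Real.exp (μ₂ * |x|) * ‖FT A x‖) := by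
          rw [hΦ]
          simp only []
          rw [hnorm, hexp]
          field_simp
        rw [hΦval]
        have hnn2 : (0:ℝ) ≤ Real.exp (μ₂ * |x|) * ‖FT A x‖ := by positivity
        calc (1 + |ε * x| ^ m₁) * ‖g (ε * x)‖ * (Real.exp (μ₂ * |x|) * ‖FT A x‖)
            ≤ 2 * C * ε ^ θ₀ * (1 + |x| ^ m₂) * (Real.exp (μ₂ * |x|) * ‖FT A x‖) :=
              mul_le_mul_of_nonneg_right hkb hnn2
          _ = (2 * C * ε ^ θ₀) * ((1 + |x| ^ m₂) * Real.exp (μ₂ * |x|) * ‖FT A x‖) := by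
              ring
      have hmono : ∫ x : ℝ, ε * Φ (ε * x)
          ≤ ∫ x : ℝ, (2 * C * ε ^ θ₀) * ((1 + |x| ^ m₂) * Real.exp (μ₂ * |x|) * ‖FT A x‖) := by
        apply integral_mono_of_nonneg
        · filter_upwards with x
          have h1 : (0:ℝ) ≤ |ε * x| ^ m₁ := Real.rpow_nonneg (abs_nonneg _) _
          have : (0:ℝ) ≤ Φ (ε * x) := by
            rw [hΦ]; simp only []; positivity
          positivity
        · exact hA.const_mul _
        · filter_upwards with x
          exact hpt x
      have hfin : ∫ x : ℝ, (2 * C * ε ^ θ₀) * ((1 + |x| ^ m₂) * Real.exp (μ₂ * |x|) * ‖FT A x‖)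
          = 2 * C * ε ^ θ₀ * Wnorm μ₂ m₂ A := by
        rw [MeasureTheory.integral_const_mul]
        rfl
      calc Wnorm (μ₁ / ε) m₁ (multOp g u) = ∫ k : ℝ, Φ k := hLHS
        _ = ∫ x : ℝ, ε * Φ (ε * x) := hchg
        _ ≤ ∫ x : ℝ, (2 * C * ε ^ θ₀) * ((1 + |x| ^ m₂) * Real.exp (μ₂ * |x|) * ‖FT A x‖) :=
            hmono
        _ = 2 * C * ε ^ θ₀ * Wnorm μ₂ m₂ A := hfin
    · -- 𝓕 h not integrable
      have hz : FourierTransform.fourier (multOp g u) = 0 := by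
        rw [hmo, Real.fourierInv_comm h]
        exact Stmt15Aux.ftInv_zero_of_not_integrable hFhint
      rw [Stmt15Aux.wnorm_of_ft_zero _ _ _ hz]
      exact hRHSnn
  · -- h not integrable
    have hz : FourierTransform.fourier (multOp g u) = 0 := by
      rw [hmo, Stmt15Aux.ftInv_zero_of_not_integrable hhint]
      funext w
      rw [Real.fourier_eq]
      simp
    rw [Stmt15Aux.wnorm_of_ft_zero _ _ _ hz]
    exact hRHSnn
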